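/- In ℝ^1, if two polygonal curves P and Q each have k vertices and every vertex of P lies within distance r of the corresponding vertex of Q (same index), while consecutive anchor values p_1 < p_2 < ⋯ < p_k satisfy p_{i+1} − p_i ≥ 4r + 2, and every vertex of P lies within distance 1 of some anchor p_i with the i-th vertex near p_i, and likewise for Q, then d_dF(P,Q) = max_i |P_i − Q_i|. -/

import Mathlib

open Real

noncomputable section

abbrev Pt (d : ℕ) := EuclideanSpace ℝ (Fin d)

/-- One step of a coupling: advance the first and/or the second index by exactly 1. -/
def CouplingStep (a b : ℕ × ℕ) : Prop :=
  (b.1 = a.1 + 1 ∧ b.2 = a.2) ∨ (b.1 = a.1 ∧ b.2 = a.2 + 1) ∨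
    (b.1 = a.1 + 1 ∧ b.2 = a.2 + 1)

/-- A coupling between a curve with `k` vertices and one with `l` vertices
(0-based indices): starts at `(0,0)`, ends at `(k-1, l-1)`, monotone unit steps. -/
def IsCoupling (k l : ℕ) (c : List (ℕ × ℕ)) : Prop :=
  c.head? = some (0, 0) ∧ c.getLast? = some (k - 1, l - 1) ∧
    c.Chain' CouplingStep ∧ ∀ ij ∈ c, ij.1 < k ∧ ij.2 < l

/-- The maximum distance over the coupled pairs of a coupling. -/
def couplingCost {d : ℕ} (P Q : List (Pt d)) (c : List (ℕ × ℕ)) : ℝ :=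
  c.foldr (fun ij acc => max (dist (P.getD ij.1 0) (Q.getD ij.2 0)) acc) 0

/-- The discrete Fréchet distance between two polygonal curves, given as lists
of their vertices. -/
def dDF {d : ℕ} (P Q : List (Pt d)) : ℝ :=
  sInf { m : ℝ | ∃ c, IsCoupling P.length Q.length c ∧ m = couplingCost P Q c }

/-- The set of nearest neighbors of a query curve `Q` in a finite set `S` of
curves, under the discrete Fréchet distance. -/
def NN {d : ℕ} (S : Finset (List (Pt d))) (Q : List (Pt d)) : Set (List (Pt d)) :=
  { P | P ∈ S ∧ ∀ P' ∈ S, dDF Q P ≤ dDF Q P' }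

/-- The point of `ℝ²` with given coordinates. -/
def e2 (x y : ℝ) : Pt 2 := (WithLp.equiv 2 (Fin 2 → ℝ)).symm ![x, y]

/-- The point of `ℝ¹` with given coordinate. -/
def e1 (x : ℝ) : Pt 1 := (WithLp.equiv 2 (Fin 1 → ℝ)).symm ![x]

-- AUX
lemma dist_e1 (a b : ℝ) : dist (e1 a) (e1 b) = |a - b| := by
  simp [e1, EuclideanSpace.dist_eq, Real.sqrt_sq_eq_abs, Real.dist_eq]

lemma cost_ge {d : ℕ} (P Q : List (Pt d)) (c : List (ℕ × ℕ)) {ij : ℕ × ℕ}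
    (h : ij ∈ c) :
    dist (P.getD ij.1 0) (Q.getD ij.2 0) ≤ couplingCost P Q c := by
  induction c with
  | nil => simp at h
  | cons a t ih =>
    rcases List.mem_cons.mp h with h | h
    · subst h; exact le_max_left _ _
    · exact le_trans (ih h) (le_max_right _ _)

lemma cost_le {d : ℕ} (P Q : List (Pt d)) (c : List (ℕ × ℕ)) {m : ℝ}
    (h0 : 0 ≤ m) (h : ∀ ij ∈ c, dist (P.getD ij.1 0) (Q.getD ij.2 0) ≤ m) :
    couplingCost P Q c ≤ m := by
  induction c with
  | nil => simpa [couplingCost] using h0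
  | cons a t ih =>
    exact max_le (h a List.mem_cons_self)
      (ih fun ij hij => h ij (List.mem_cons_of_mem a hij))

lemma sep_lemma {k : ℕ} (p : Fin k → ℝ) (r : ℝ) (hr : 0 ≤ r)
    (hsep : ∀ i : Fin k, ∀ h : (i : ℕ) + 1 < k, 4 * r + 2 ≤ p ⟨i + 1, h⟩ - p i) :
    ∀ (b : ℕ) (hb : b < k) (i : Fin k), (i : ℕ) < b → 4 * r + 2 ≤ p ⟨b, hb⟩ - p i := by
  intro b
  induction b with
  | zero => omega
  | succ n ih =>
    intro hb i hib
    have hn : n < k := by omega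
    rcases Nat.lt_or_ge (i : ℕ) n with h | h
    · have h1 := ih hn i h
      have h2 := hsep ⟨n, hn⟩ hb
      simp only at h2
      linarith
    · have hin : (i : ℕ) = n := by omega
      have h2 := hsep i (by omega)
      have : (⟨(i : ℕ) + 1, by omega⟩ : Fin k) = ⟨n + 1, hb⟩ := by
        ext; simp [hin]
      rw [this] at h2
      exact h2

lemma diag_get (c : List (ℕ × ℕ)) (hc : c.Chain' CouplingStep)
    (hh : c.head? = some (0, 0)) (hd : ∀ ij ∈ c, ij.1 = ij.2) :
    ∀ n (hn : n < c.length), c.get ⟨n, hn⟩ = (n, n) := by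
  intro n
  induction n with
  | zero =>
    intro hn
    cases c with
    | nil => simp at hn
    | cons a t => simpa using hh
  | succ n ih =>
    intro hn
    have h1 : n < c.length - 1 := by omega
    have step : CouplingStep (c.get ⟨n, by omega⟩) (c.get ⟨n + 1, hn⟩) := List.isChain_iff_getElem.mp hc n (by omega)
    rw [ih (by omega)] at step
    have hmem : c.get ⟨n + 1, hn⟩ ∈ c := List.get_mem c _
    have hd2 := hd _ hmem
    set b := c.get ⟨n + 1, hn⟩ with hbdef
    rcases step with ⟨f1, f2⟩ | ⟨f1, f2⟩ | ⟨f1, f2⟩ <;>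
      (first
        | (exact absurd hd2 (by omega))
        | (ext <;> simp [f1, f2]))

/-- in `ℝ¹`, if anchors are separated by at least `4r + 2`, each
vertex of `P` and of `Q` lies within distance `1` of its anchor, and
corresponding vertices are within distance `r`, then the discrete Fréchet
distance equals the maximum distance over corresponding vertices. -/
theorem dDF_eq_sup_of_anchored (k : ℕ) (hk : 0 < k) (P Q : Fin k → Pt 1)
    (r : ℝ) (hr : 0 ≤ r) (p : Fin k → ℝ)
    (hsep : ∀ i : Fin k, ∀ h : (i : ℕ) + 1 < k, 4 * r + 2 ≤ p ⟨i + 1, h⟩ - p i)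
    (hPa : ∀ i, dist (P i) (e1 (p i)) ≤ 1)
    (hQa : ∀ i, dist (Q i) (e1 (p i)) ≤ 1)
    (hnear : ∀ i, dist (P i) (Q i) ≤ r) :
    dDF (List.ofFn P) (List.ofFn Q) = ⨆ i, dist (P i) (Q i) := by
  have hne : Nonempty (Fin k) := ⟨⟨0, hk⟩⟩
  set M := ⨆ i, dist (P i) (Q i) with hM
  have hbdd : BddAbove (Set.range fun i => dist (P i) (Q i)) :=
    (Set.finite_range _).bddAbove
  have hMr : M ≤ r := ciSup_le fun i => hnear i
  have hM0 : 0 ≤ M := le_trans dist_nonneg (le_ciSup hbdd ⟨0, hk⟩)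
  have hMi : ∀ i, dist (P i) (Q i) ≤ M := fun i => le_ciSup hbdd i
  have hPget : ∀ (i : ℕ) (h : i < k), (List.ofFn P).getD i 0 = P ⟨i, h⟩ := by
    intro i h
    rw [List.getD_eq_getElem _ _ (by simpa using h), List.getElem_ofFn]
  have hQget : ∀ (i : ℕ) (h : i < k), (List.ofFn Q).getD i 0 = Q ⟨i, h⟩ := by
    intro i h
    rw [List.getD_eq_getElem _ _ (by simpa using h), List.getElem_ofFn]
  -- distance lower bound for off-diagonal pairs
  have hoff : ∀ (i j : Fin k), i ≠ j → M ≤ dist (P i) (Q j) := by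
    intro i j hij
    have hpij : 4 * r + 2 ≤ |p i - p j| := by
      rcases Nat.lt_or_ge (i : ℕ) (j : ℕ) with h | h
      · have := sep_lemma p r hr hsep (j : ℕ) j.isLt i h
        simp only [Fin.eta] at this
        rw [abs_sub_comm]
        calc 4 * r + 2 ≤ p j - p i := this
          _ ≤ |p j - p i| := le_abs_self _
      · have hlt : (j : ℕ) < (i : ℕ) := by
          rcases Nat.lt_or_ge (j : ℕ) (i : ℕ) with h' | h'
          · exact h'
          · exact absurd (Fin.ext (le_antisymm h h')).symm hij
        have := sep_lemma p r hr hsep (i : ℕ) i.isLt j hlt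
        simp only [Fin.eta] at this
        calc 4 * r + 2 ≤ p i - p j := this
          _ ≤ |p i - p j| := le_abs_self _
    have htri : dist (e1 (p i)) (e1 (p j)) ≤
        dist (e1 (p i)) (P i) + dist (P i) (Q j) + dist (Q j) (e1 (p j)) :=
      dist_triangle4 _ _ _ _
    rw [dist_e1] at htri
    have h1 : dist (e1 (p i)) (P i) ≤ 1 := by rw [dist_comm]; exact hPa i
    have h2 : dist (Q j) (e1 (p j)) ≤ 1 := hQa j
    have : 4 * r ≤ dist (P i) (Q j) := by linarith
    linarith
  -- the diagonal coupling
  set c₀ : List (ℕ × ℕ) := List.ofFn (fun i : Fin k => ((i : ℕ), (i : ℕ))) with hc₀def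
  have hlen : c₀.length = k := by simp [hc₀def]
  have hget₀ : ∀ (n : ℕ) (h : n < k), c₀.get ⟨n, by omega⟩ = (n, n) := by
    intro n h
    simp [hc₀def, List.get_eq_getElem, List.getElem_ofFn]
  have hc₀ : IsCoupling k k c₀ := by
    refine ⟨?_, ?_, ?_, ?_⟩
    · rw [List.head?_eq_getElem?]
      rw [List.getElem?_eq_getElem (by omega)]
      have := hget₀ 0 hk
      simp [List.get_eq_getElem] at this
      simp [this]
    · rw [List.getLast?_eq_getElem?, hlen]
      rw [List.getElem?_eq_getElem (by omega)]
      have := hget₀ (k - 1) (by omega)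
      simp [List.get_eq_getElem] at this
      simp [this]
    · refine List.isChain_iff_getElem.mpr ?_
      intro n h
      rw [hlen] at h
      have e1 := hget₀ n (by omega)
      have e2 := hget₀ (n + 1) (by omega)
      simp only [List.get_eq_getElem] at e1 e2 ⊢
      rw [e1, e2]
      exact Or.inr (Or.inr ⟨rfl, rfl⟩)
    · intro ij hij
      rw [hc₀def, List.mem_ofFn] at hij
      obtain ⟨i, rfl⟩ := hij
      exact ⟨i.isLt, i.isLt⟩
  have hdiagmem : ∀ i : Fin k, ((i : ℕ), (i : ℕ)) ∈ c₀ := by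
    intro i
    rw [hc₀def, List.mem_ofFn]
    exact ⟨i, rfl⟩
  have hcost₀ : couplingCost (List.ofFn P) (List.ofFn Q) c₀ = M := by
    apply le_antisymm
    · apply cost_le _ _ _ hM0
      intro ij hij
      rw [hc₀def, List.mem_ofFn] at hij
      obtain ⟨i, rfl⟩ := hij
      rw [hPget _ i.isLt, hQget _ i.isLt]
      simpa using hMi i
    · apply ciSup_le
      intro i
      have := cost_ge (List.ofFn P) (List.ofFn Q) c₀ (hdiagmem i)
      rwa [hPget _ i.isLt, hQget _ i.isLt] at this
  -- lower bound for every coupling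
  have hlb : ∀ m ∈ { m : ℝ | ∃ c, IsCoupling (List.ofFn P).length (List.ofFn Q).length c ∧
      m = couplingCost (List.ofFn P) (List.ofFn Q) c }, M ≤ m := by
    rintro m ⟨c, ⟨hh, hl, hch, hmem⟩, rfl⟩
    simp only [List.length_ofFn] at hh hl hmem
    by_cases hdiag : ∀ ij ∈ c, ij.1 = ij.2
    · -- all pairs diagonal: c contains every (i,i)
      have hgc := diag_get c hch hh hdiag
      have hcne : c ≠ [] := by
        intro h; rw [h] at hh; simp at hh
      have hlenpos : 0 < c.length := List.length_pos_iff.mpr hcne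
      have hlast : c.get ⟨c.length - 1, by omega⟩ = (k - 1, k - 1) := by
        rw [List.getLast?_eq_getElem?, List.getElem?_eq_getElem (by omega)] at hl
        simpa [List.get_eq_getElem] using hl
      rw [hgc (c.length - 1) (by omega)] at hlast
      have hclen : c.length = k := by
        have := congrArg Prod.fst hlast
        simp at this
        omega
      apply ciSup_le
      intro i
      have hmem' : ((i : ℕ), (i : ℕ)) ∈ c := by
        have := hgc (i : ℕ) (by omega)
        rw [← this]
        exact List.get_mem c _
      have := cost_ge (List.ofFn P) (List.ofFn Q) c hmem'
      rwa [hPget _ i.isLt, hQget _ i.isLt] at this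
    · push_neg at hdiag
      obtain ⟨ij, hijc, hijne⟩ := hdiag
      obtain ⟨hi, hj⟩ := hmem ij hijc
      have := cost_ge (List.ofFn P) (List.ofFn Q) c hijc
      rw [hPget _ hi, hQget _ hj] at this
      have hne' : (⟨ij.1, hi⟩ : Fin k) ≠ ⟨ij.2, hj⟩ := by
        intro h
        exact hijne (congrArg Fin.val h)
      exact le_trans (hoff _ _ hne') this
  -- conclude
  have hmem₀ : M ∈ { m : ℝ | ∃ c, IsCoupling (List.ofFn P).length (List.ofFn Q).length c ∧
      m = couplingCost (List.ofFn P) (List.ofFn Q) c } := by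
    refine ⟨c₀, ?_, hcost₀.symm⟩
    simpa [List.length_ofFn] using hc₀
  exact le_antisymm (csInf_le ⟨M, hlb⟩ hmem₀) (le_csInf ⟨M, hmem₀⟩ hlb)
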